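/- Let G be a simple graph and v a vertex such that for every vertex c with c ≠ v and ¬G.Adj c v one has g_v(G) ≥ dist_G(c,v) + 1. Then the one-edge local girth of v satisfies g_v^{(1)}(G) = sup over all vertices c with c ≠ v and ¬G.Adj c v of ( dist_G(c,v) + 1 ), and this common value also equals the supremum over such c of the infimum of the lengths of cycles of G+(c,v) containing the edge {c,v}. -/

import Mathlib

open SimpleGraph

variable {V : Type*}

/-- `G + (c,v)`: the graph obtained from `G` by adding the edge `{c, v}`. -/
def addEdge (G : SimpleGraph V) (c v : V) : SimpleGraph V :=
  G ⊔ SimpleGraph.fromEdgeSet {s(c, v)}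

/-- The local girth of a vertex `v`: the infimum (in `ℕ∞`) of the lengths of
cycles of `G` passing through `v`. -/
noncomputable def localGirth (G : SimpleGraph V) (v : V) : ℕ∞ :=
  ⨅ (a : V) (w : G.Walk a a) (_ : w.IsCycle) (_ : v ∈ w.support), (w.length : ℕ∞)

/-- The edge local girth of `e`: the infimum (in `ℕ∞`) of the lengths of
cycles of `G` containing the edge `e`. -/
noncomputable def edgeLocalGirth (G : SimpleGraph V) (e : Sym2 V) : ℕ∞ :=
  ⨅ (a : V) (w : G.Walk a a) (_ : w.IsCycle) (_ : e ∈ w.edges), (w.length : ℕ∞)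

/-- A length-`r` valid sequence for `v` in `G`: pairwise distinct vertices,
each distinct from `v` and not adjacent to `v` in `G`. -/
def ValidSeq (G : SimpleGraph V) (v : V) {r : ℕ} (s : Fin r → V) : Prop :=
  Function.Injective s ∧ ∀ i, s i ≠ v ∧ ¬ G.Adj (s i) v

/-- The graph sequence of a sequence `s`: `graphSeq G v s 0 = G₁ = G` and
`graphSeq G v s i = G_{i+1} = G_i + (s_i, v)`. -/
def graphSeq (G : SimpleGraph V) (v : V) {r : ℕ} (s : Fin r → V) : ℕ → SimpleGraph V
  | 0 => G
  | i + 1 => if h : i < r then addEdge (graphSeq G v s i) (s ⟨i, h⟩) v else graphSeq G v s i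

/-- The `r`-edge local girth of `v` in `G`: the supremum, over all length-`r`
valid sequences `s` for `v`, of the local girth of `v` in the final graph. -/
noncomputable def multiEdgeLocalGirth (G : SimpleGraph V) (v : V) (r : ℕ) : ℕ∞ :=
  ⨆ (s : Fin r → V) (_ : ValidSeq G v s), localGirth (graphSeq G v s r) v

/-- The `r`-edge local girth of `c` with respect to `v`:
`g_v(G+(c,v))` if `r = 1`, and `g_v^{(r-1)}(G+(c,v))` if `r ≥ 2`. -/
noncomputable def cnMultiEdgeLocalGirth (G : SimpleGraph V) (c v : V) (r : ℕ) : ℕ∞ :=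
  if r = 1 then localGirth (addEdge G c v) v
  else multiEdgeLocalGirth (addEdge G c v) v (r - 1)

/- Auxiliary lemmas -/

lemma localGirth_le {G : SimpleGraph V} {v a : V} {w : G.Walk a a}
    (hw : w.IsCycle) (hv : v ∈ w.support) : localGirth G v ≤ w.length :=
  iInf_le_of_le a <| iInf_le_of_le w <| iInf_le_of_le hw <| iInf_le_of_le hv le_rfl

lemma edgeLocalGirth_le {G : SimpleGraph V} {e : Sym2 V} {a : V} {w : G.Walk a a}
    (hw : w.IsCycle) (he : e ∈ w.edges) : edgeLocalGirth G e ≤ w.length :=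
  iInf_le_of_le a <| iInf_le_of_le w <| iInf_le_of_le hw <| iInf_le_of_le he le_rfl

lemma edges_mem_of_addEdge {G : SimpleGraph V} {c v x y : V}
    (p : (addEdge G c v).Walk x y) (he : s(c,v) ∉ p.edges) :
    ∀ e ∈ p.edges, e ∈ G.edgeSet := by
  intro e hep
  have h1 := p.edges_subset_edgeSet hep
  rw [addEdge, edgeSet_sup, edgeSet_fromEdgeSet] at h1
  rcases h1 with h1 | h1
  · exact h1
  · exfalso
    have : e = s(c,v) := h1.1
    exact he (this ▸ hep)

lemma edist_le_of_avoid {G : SimpleGraph V} {c v x y : V}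
    (p : (addEdge G c v).Walk x y) (he : s(c,v) ∉ p.edges) :
    G.edist x y ≤ p.length := by
  have := G.edist_le (p.transfer G (edges_mem_of_addEdge p he))
  rwa [SimpleGraph.Walk.length_transfer] at this

lemma cycle_length_ge {G : SimpleGraph V} {c v a : V}
    (w : (addEdge G c v).Walk a a) (hw : w.IsCycle) (he : s(c,v) ∈ w.edges) :
    G.edist c v + 1 ≤ w.length := by
  classical
  have hv : v ∈ w.support := w.snd_mem_support_of_mem_edges he
  set w' := w.rotate v hv with hw'def
  have hperm := SimpleGraph.Walk.rotate_edges w v hv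
  have hlen : w'.length = w.length := by
    rw [← SimpleGraph.Walk.length_edges, ← SimpleGraph.Walk.length_edges]
    exact hperm.perm.length_eq
  have he' : s(c,v) ∈ w'.edges := hperm.perm.mem_iff.mpr he
  have hc : c ∈ w'.support := w'.fst_mem_support_of_mem_edges he'
  have hspec := w'.take_spec hc
  have hnodup : w'.edges.Nodup := (hw.rotate hv).edges_nodup
  set p1 := w'.takeUntil c hc
  set p2 := w'.dropUntil c hc
  have hedges : w'.edges = p1.edges ++ p2.edges := by
    conv_lhs => rw [← hspec]
    exact SimpleGraph.Walk.edges_append _ _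
  rw [hedges] at hnodup he'
  have hdisj := (List.nodup_append.mp hnodup).2.2
  have hlen2 : w'.length = p1.length + p2.length := by
    conv_lhs => rw [← hspec]
    exact SimpleGraph.Walk.length_append _ _
  rw [← hlen, hlen2]
  rcases List.mem_append.mp he' with h | h
  · -- edge in p1 : Walk v c ; p2 : Walk c v avoids it
    have hav : s(c,v) ∉ p2.edges := fun h2 => hdisj _ h _ h2 rfl
    have h1 : G.edist c v ≤ p2.length := edist_le_of_avoid p2 hav
    have h2 : 1 ≤ p1.length := by
      rcases Nat.eq_zero_or_pos p1.length with h0 | h0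
      · exfalso
        have h3 : p1.edges = [] :=
          List.length_eq_zero_iff.mp (by rw [SimpleGraph.Walk.length_edges, h0])
        simp [h3] at h
      · exact h0
    calc G.edist c v + 1 ≤ (p2.length : ℕ∞) + (p1.length : ℕ∞) :=
          add_le_add h1 (by exact_mod_cast h2)
      _ = ((p1.length + p2.length : ℕ) : ℕ∞) := by push_cast; ring
  · have hav : s(c,v) ∉ p1.edges := fun h1 => hdisj _ h1 _ h rfl
    have h1 : G.edist c v ≤ p1.length := by
      rw [SimpleGraph.edist_comm]
      exact edist_le_of_avoid p1 hav
    have h2 : 1 ≤ p2.length := by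
      rcases Nat.eq_zero_or_pos p2.length with h0 | h0
      · exfalso
        have h3 : p2.edges = [] :=
          List.length_eq_zero_iff.mp (by rw [SimpleGraph.Walk.length_edges, h0])
        simp [h3] at h
      · exact h0
    calc G.edist c v + 1 ≤ (p1.length : ℕ∞) + (p2.length : ℕ∞) :=
          add_le_add h1 (by exact_mod_cast h2)
      _ = ((p1.length + p2.length : ℕ) : ℕ∞) := by push_cast; ring

lemma addEdge_exists_cycle {G : SimpleGraph V} {c v : V} (hcv : c ≠ v) (hadj : ¬ G.Adj c v)
    {d : ℕ} (hd : G.edist c v = d) :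
    ∃ w : (addEdge G c v).Walk v v, w.IsCycle ∧ s(c,v) ∈ w.edges ∧ w.length = d + 1 := by
  classical
  obtain ⟨p, hp⟩ := exists_walk_of_edist_eq_coe hd
  set q := p.bypass with hqdef
  have hq : q.IsPath := p.bypass_isPath
  have hql : q.length = d := le_antisymm (hp ▸ p.length_bypass_le) (by
    have := G.edist_le q
    rw [hd] at this
    exact_mod_cast this)
  have hvc : (addEdge G c v).Adj v c := by
    refine Or.inr ((SimpleGraph.fromEdgeSet_adj _).mpr ⟨?_, Ne.symm hcv⟩)
    rw [Set.mem_singleton_iff, Sym2.eq_swap]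
  have hsub : ∀ e ∈ q.edges, e ∈ (addEdge G c v).edgeSet := by
    intro e he
    rw [addEdge, SimpleGraph.edgeSet_sup]
    exact Or.inl (q.edges_subset_edgeSet he)
  refine ⟨SimpleGraph.Walk.cons hvc (q.transfer _ hsub), ?_, ?_, ?_⟩
  · rw [SimpleGraph.Walk.cons_isCycle_iff]
    refine ⟨hq.transfer hsub, fun hmem => ?_⟩
    rw [SimpleGraph.Walk.edges_transfer] at hmem
    exact hadj ((SimpleGraph.Walk.edges_subset_edgeSet q hmem).symm)
  · simp [Sym2.eq_swap]
  · simp [hql]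

lemma localGirth_addEdge {G : SimpleGraph V} {c v : V} (hcv : c ≠ v) (hadj : ¬ G.Adj c v)
    (hg : G.edist c v + 1 ≤ localGirth G v) :
    localGirth (addEdge G c v) v = G.edist c v + 1 := by
  apply le_antisymm
  · rcases eq_or_ne (G.edist c v) ⊤ with h | h
    · rw [h]
      simp
    · lift G.edist c v to ℕ using h with d hd
      obtain ⟨w, hw, _, hlw⟩ := addEdge_exists_cycle hcv hadj hd.symm
      have h2 := localGirth_le hw w.start_mem_support
      rw [hlw] at h2
      refine h2.trans_eq ?_
      push_cast
      rfl
  · refine le_iInf fun a => le_iInf fun w => le_iInf fun hw => le_iInf fun hv => ?_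
    by_cases he : s(c,v) ∈ w.edges
    · exact cycle_length_ge w hw he
    · have hmem := edges_mem_of_addEdge w he
      have hcyc := hw.transfer hmem
      have h2 : localGirth G v ≤ ((w.transfer G hmem).length : ℕ∞) :=
        localGirth_le hcyc (by rw [SimpleGraph.Walk.support_transfer]; exact hv)
      rw [SimpleGraph.Walk.length_transfer] at h2
      exact le_trans hg h2

lemma edgeLocalGirth_addEdge {G : SimpleGraph V} {c v : V} (hcv : c ≠ v) (hadj : ¬ G.Adj c v) :
    edgeLocalGirth (addEdge G c v) s(c,v) = G.edist c v + 1 := by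
  apply le_antisymm
  · rcases eq_or_ne (G.edist c v) ⊤ with h | h
    · rw [h]
      simp
    · lift G.edist c v to ℕ using h with d hd
      obtain ⟨w, hw, hew, hlw⟩ := addEdge_exists_cycle hcv hadj hd.symm
      have h2 := edgeLocalGirth_le hw hew
      rw [hlw] at h2
      refine h2.trans_eq ?_
      push_cast
      rfl
  · exact le_iInf fun a => le_iInf fun w => le_iInf fun hw => le_iInf fun he =>
      cycle_length_ge w hw he

lemma graphSeq_one (G : SimpleGraph V) (v : V) (s : Fin 1 → V) :
    graphSeq G v s 1 = addEdge G (s 0) v := by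
  simp [graphSeq]

lemma multi_one (G : SimpleGraph V) (v : V) :
    multiEdgeLocalGirth G v 1 =
      ⨆ (c : V) (_ : c ≠ v) (_ : ¬ G.Adj c v), localGirth (addEdge G c v) v := by
  apply le_antisymm
  · refine iSup_le fun s => iSup_le fun hs => ?_
    obtain ⟨h1, h2⟩ := (hs.2) 0
    rw [graphSeq_one]
    exact le_iSup_of_le (s 0) (le_iSup_of_le h1 (le_iSup_of_le h2 le_rfl))
  · refine iSup_le fun c => iSup_le fun hc => iSup_le fun hadj => ?_
    refine le_iSup_of_le (fun _ => c)
      (le_iSup_of_le ⟨fun a b _ => Subsingleton.elim a b, fun _ => ⟨hc, hadj⟩⟩ (le_of_eq ?_))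
    rw [graphSeq_one]

/-- If for every `c ≠ v` not adjacent to `v` one has
`g_v(G) ≥ dist_G(c,v) + 1`, then the one-edge local girth of `v` satisfies
`g_v^{(1)}(G) = sup_{c ≠ v, ¬G.Adj c v} (dist_G(c,v) + 1)`, and this also equals
`sup_{c ≠ v, ¬G.Adj c v}` of the infimum of the lengths of cycles of `G+(c,v)`
containing the edge `{c,v}`. -/
theorem stmt_10 (G : SimpleGraph V) (v : V)
    (hg : ∀ c : V, c ≠ v → ¬ G.Adj c v → G.edist c v + 1 ≤ localGirth G v) :
    multiEdgeLocalGirth G v 1 =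
      (⨆ (c : V) (_ : c ≠ v) (_ : ¬ G.Adj c v), (G.edist c v + 1)) ∧
    multiEdgeLocalGirth G v 1 =
      ⨆ (c : V) (_ : c ≠ v) (_ : ¬ G.Adj c v), edgeLocalGirth (addEdge G c v) s(c, v) := by
  have key : multiEdgeLocalGirth G v 1 =
      ⨆ (c : V) (_ : c ≠ v) (_ : ¬ G.Adj c v), (G.edist c v + 1) := by
    rw [multi_one]
    exact iSup_congr fun c => iSup_congr fun hc => iSup_congr fun hadj =>
      localGirth_addEdge hc hadj (hg c hc hadj)
  refine ⟨key, ?_⟩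
  rw [key]
  exact (iSup_congr fun c => iSup_congr fun (hc : c ≠ v) => iSup_congr fun (hadj : ¬ G.Adj c v) =>
    edgeLocalGirth_addEdge hc hadj).symm
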